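/- arXiv:1907.02512 — 2 statements merged into one kernel-verified Lean document; each statement's English description precedes it below -/
import Mathlib

section
/- Let ⟨𝔅, ψ, (Y, ℝ, σ)⟩ be an affine cocycle over a flow (Y, ℝ, σ) with fibre a finite-dimensional Banach space 𝔅, and let ⟨(X, ℝ₊, π), (Y, ℝ, σ), h⟩ be the skew-product nonautonomous system with X := 𝔅 × Y, π(t, (u, y)) := (ψ(t, u, y), σ(t, y)), h := pr₂. Assume the point y₀ ∈ Y is positively Poisson stable and there exists u₀ ∈ 𝔅 such that {ψ(t, u₀, y₀) : t ≥ 0} is relatively compact in 𝔅. Set x₀ := (u₀, y₀). Then: (1) the ω-limit set K := ω_{x₀} ⊆ X is conditionally compact with respect to h; (2) M := cl co(K ∩ X_{y₀}) is a compact convex subset of X_{y₀} = 𝔅 × {y₀}; (3) the set ℰ⁺_{y₀} of pointwise limits on M of the maps π(t_n, ·) along sequences {t_n} ∈ 𝔑_{y₀}^{+∞} is a compact sub-semigroup of the semigroup M^M; (4) every ξ ∈ ℰ⁺_{y₀} is affine and continuous (indeed Lipschitz with a constant independent of ξ). -/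
open Filter Topology

private lemma auxDiv (C : ℝ) : Tendsto (fun m : ℕ => C / (m + 1)) atTop (𝓝 0) := by
  have h := (tendsto_const_div_atTop_nhds_zero_nat C).comp (tendsto_add_atTop_nat 1)
  exact h.congr fun m => by simp only [Function.comp_apply]; push_cast; ring

private lemma auxTendsto {α : Type*} [PseudoMetricSpace α] {a : ℕ → α} {b : α} {g : ℕ → ℝ}
    (hg : Tendsto g atTop (𝓝 0)) (h : ∀ᶠ m in atTop, dist (a m) b ≤ g m) :
    Tendsto a atTop (𝓝 b) := by
  rw [tendsto_iff_dist_tendsto_zero]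
  exact squeeze_zero' (Eventually.of_forall fun _ => dist_nonneg) h hg

set_option maxHeartbeats 1000000 in
set_option synthInstance.maxHeartbeats 400000 in
/-- Structure lemma for an affine cocycle `ψ` (with associated linear cocycle `φ`)
over a flow `(Y, ℝ, σ)` with finite-dimensional Banach fibre `𝔅`, a positively
Poisson stable point `y₀`, and a point `u₀` with relatively compact forward orbit:
(1) the ω-limit set `K` of `x₀ = (u₀, y₀)` in the skew product is conditionally
compact with respect to `h = pr₂`; (2) `M = cl co K_{y₀}` is a compact convex subset
of the fibre over `y₀`; (3) the set `ℰ⁺_{y₀}` of pointwise limits on `M` of the maps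
`π(t_n, ·)` along sequences in `𝔑_{y₀}^{+∞}` is a compact sub-semigroup of `M^M`;
(4) every `ξ ∈ ℰ⁺_{y₀}` is affine and Lipschitz (hence continuous) with a constant
independent of `ξ`. -/
theorem affine_cocycle_limit_semigroup_structure
    {Y : Type} [MetricSpace Y] {𝔅 : Type} [NormedAddCommGroup 𝔅]
    [NormedSpace ℝ 𝔅] [FiniteDimensional ℝ 𝔅]
    (σ : ℝ → Y → Y)
    (hσcont : Continuous (fun p : ℝ × Y => σ p.1 p.2))
    (hσ0 : ∀ y, σ 0 y = y)
    (hσadd : ∀ t s : ℝ, ∀ y, σ (t + s) y = σ t (σ s y))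
    (ψ φ : ℝ → 𝔅 → Y → 𝔅)
    (hψcont : ContinuousOn (fun p : ℝ × 𝔅 × Y => ψ p.1 p.2.1 p.2.2)
      {p : ℝ × 𝔅 × Y | 0 ≤ p.1})
    (hψ0 : ∀ u y, ψ 0 u y = u)
    (hψadd : ∀ t τ : ℝ, 0 ≤ t → 0 ≤ τ → ∀ u y,
      ψ (t + τ) u y = ψ t (ψ τ u y) (σ τ y))
    (hφcont : ContinuousOn (fun p : ℝ × 𝔅 × Y => φ p.1 p.2.1 p.2.2)
      {p : ℝ × 𝔅 × Y | 0 ≤ p.1})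
    (hφ0 : ∀ u y, φ 0 u y = u)
    (hφadd : ∀ t τ : ℝ, 0 ≤ t → 0 ≤ τ → ∀ u y,
      φ (t + τ) u y = φ t (φ τ u y) (σ τ y))
    (hφlin : ∀ t : ℝ, 0 ≤ t → ∀ y, IsLinearMap ℝ (fun u => φ t u y))
    (hlink : ∀ t : ℝ, 0 ≤ t → ∀ u v y, ψ t u y - ψ t v y = φ t (u - v) y)
    (y₀ : Y) (u₀ : 𝔅)
    (hPoisson : ∃ tn : ℕ → ℝ, Tendsto tn atTop atTop ∧
      Tendsto (fun k => σ (tn k) y₀) atTop (𝓝 y₀))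
    (horbit : IsCompact (closure {v : 𝔅 | ∃ t : ℝ, 0 ≤ t ∧ v = ψ t u₀ y₀}))
    (π : ℝ → 𝔅 × Y → 𝔅 × Y)
    (hπ : π = fun t p => (ψ t p.1 p.2, σ t p.2))
    (K : Set (𝔅 × Y))
    (hK : K = {p : 𝔅 × Y | ∀ T : ℝ, 0 ≤ T →
      p ∈ closure {q : 𝔅 × Y | ∃ s : ℝ, T ≤ s ∧ q = π s (u₀, y₀)}})
    (M : Set 𝔅)
    (hM : M = closure (convexHull ℝ {u : 𝔅 | (u, y₀) ∈ K}))
    (E : Set (↥M → ↥M))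
    (hE : E = {ξ | ∃ tn : ℕ → ℝ, Tendsto tn atTop atTop ∧
      Tendsto (fun k => σ (tn k) y₀) atTop (𝓝 y₀) ∧
      ∀ p : ↥M, Tendsto (fun k => ψ (tn k) p.1 y₀) atTop (𝓝 (ξ p).1)}) :
    -- (1) K is conditionally compact with respect to h = pr₂
    (IsClosed K ∧ ∀ Y' : Set Y, IsCompact (closure Y') →
      IsCompact (closure (K ∩ Prod.snd ⁻¹' Y'))) ∧
    -- (2) M is a compact convex subset of the fibre over y₀
    (IsCompact M ∧ Convex ℝ M) ∧
    -- (3) ℰ⁺_{y₀} is a compact sub-semigroup of M^M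
    (IsCompact E ∧ ∀ ξ₁ ∈ E, ∀ ξ₂ ∈ E, ξ₁ ∘ ξ₂ ∈ E) ∧
    -- (4) every ξ ∈ ℰ⁺_{y₀} is affine and Lipschitz with a uniform constant
    (∃ L > (0 : ℝ), ∀ ξ ∈ E,
      (∀ (p q : ↥M) (a b : ℝ), 0 ≤ a → 0 ≤ b → a + b = 1 →
        ∀ hm : a • (p : 𝔅) + b • (q : 𝔅) ∈ M,
          (ξ ⟨a • (p : 𝔅) + b • (q : 𝔅), hm⟩ : 𝔅) = a • (ξ p : 𝔅) + b • (ξ q : 𝔅)) ∧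
      Continuous ξ ∧
      ∀ p q : ↥M, dist (ξ p : 𝔅) (ξ q : 𝔅) ≤ L * dist (p : 𝔅) (q : 𝔅)) := by
  classical
  have hσy : ∀ t : ℝ, Continuous fun y => σ t y := fun t =>
    hσcont.comp (continuous_const.prodMk continuous_id)
  set C : Set 𝔅 := closure {v : 𝔅 | ∃ t : ℝ, 0 ≤ t ∧ v = ψ t u₀ y₀} with hC
  have hCc : IsCompact C := horbit
  have htail : ∀ T : ℝ, 0 ≤ T →
      {q : 𝔅 × Y | ∃ s : ℝ, T ≤ s ∧ q = π s (u₀, y₀)} ⊆ C ×ˢ (Set.univ : Set Y) := by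
    intro T hT q hq
    obtain ⟨s, hs, rfl⟩ := hq
    rw [hπ]
    exact ⟨subset_closure ⟨s, hT.trans hs, rfl⟩, trivial⟩
  have hK1 : ∀ p ∈ K, p.1 ∈ C := by
    intro p hp
    rw [hK] at hp
    have h0 := hp 0 le_rfl
    have hcl : closure {q : 𝔅 × Y | ∃ s : ℝ, (0:ℝ) ≤ s ∧ q = π s (u₀, y₀)} ⊆ C ×ˢ Set.univ :=
      closure_minimal (htail 0 le_rfl) (hCc.isClosed.prod isClosed_univ)
    exact (hcl h0).1
  -- (1)
  have hKclosed : IsClosed K := by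
    rw [hK]
    have heq : {p : 𝔅 × Y | ∀ T : ℝ, 0 ≤ T →
        p ∈ closure {q : 𝔅 × Y | ∃ s : ℝ, T ≤ s ∧ q = π s (u₀, y₀)}} =
        ⋂ T : ℝ, ⋂ _ : 0 ≤ T, closure {q : 𝔅 × Y | ∃ s : ℝ, T ≤ s ∧ q = π s (u₀, y₀)} := by
      ext p; simp [Set.mem_iInter]
    rw [heq]
    exact isClosed_iInter fun T => isClosed_iInter fun _ => isClosed_closure
  have hcond : ∀ Y' : Set Y, IsCompact (closure Y') →
      IsCompact (closure (K ∩ Prod.snd ⁻¹' Y')) := by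
    intro Y' hY'
    have hsub : closure (K ∩ Prod.snd ⁻¹' Y') ⊆ C ×ˢ closure Y' := by
      apply closure_minimal _ (hCc.isClosed.prod isClosed_closure)
      rintro p ⟨hp, hp2⟩
      exact ⟨hK1 p hp, subset_closure hp2⟩
    exact (hCc.prod hY').of_isClosed_subset isClosed_closure hsub
  -- (2)
  have hMclosed : IsClosed M := by rw [hM]; exact isClosed_closure
  have hMbdd : Bornology.IsBounded M := by
    rw [hM]
    apply Bornology.IsBounded.closure
    refine isBounded_convexHull.2 (hCc.isBounded.subset ?_)
    intro u hu; exact hK1 (u, y₀) hu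
  have hMc : IsCompact M := Metric.isCompact_of_isClosed_isBounded hMclosed hMbdd
  have hMconv : Convex ℝ M := by rw [hM]; exact (convex_convexHull ℝ _).closure
  -- a point of M
  obtain ⟨tn0, htn0, hσtn0⟩ := hPoisson
  obtain ⟨K₀, hK₀⟩ := eventually_atTop.mp (htn0.eventually_ge_atTop 0)
  set t' : ℕ → ℝ := fun k => tn0 (k + K₀) with ht'def
  have ht'0 : ∀ k, 0 ≤ t' k := fun k => hK₀ _ (Nat.le_add_left _ _)
  have ht' : Tendsto t' atTop atTop := htn0.comp (tendsto_add_atTop_nat K₀)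
  have hσt' : Tendsto (fun k => σ (t' k) y₀) atTop (𝓝 y₀) :=
    hσtn0.comp (tendsto_add_atTop_nat K₀)
  have hmemC : ∀ k, ψ (t' k) u₀ y₀ ∈ C := fun k => subset_closure ⟨t' k, ht'0 k, rfl⟩
  obtain ⟨u₁, _hu₁C, g0, hg0, hgt⟩ := hCc.tendsto_subseq hmemC
  have hu₁K : (u₁, y₀) ∈ K := by
    rw [hK]; intro T hT
    have htg : Tendsto (fun k => t' (g0 k)) atTop atTop := ht'.comp hg0.tendsto_atTop
    apply mem_closure_of_tendsto
      (f := fun k => π (t' (g0 k)) (u₀, y₀)) (b := atTop)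
    · rw [hπ]
      have hprod := hgt.prodMk (hσt'.comp hg0.tendsto_atTop)
      simpa [Function.comp_def, nhds_prod_eq] using hprod
    · filter_upwards [htg.eventually_ge_atTop T] with k hk
      exact ⟨t' (g0 k), hk, rfl⟩
  have hp₀M : u₁ ∈ M := by
    rw [hM]; exact subset_closure (subset_convexHull ℝ _ hu₁K)
  set p₀ : ↥M := ⟨u₁, hp₀M⟩ with hp₀def
  haveI : CompactSpace ↥M := isCompact_iff_compactSpace.mp hMc
  -- linear algebra set-up
  obtain ⟨sb, hsbS, hspan, hli⟩ :=
    exists_linearIndependent ℝ {v : 𝔅 | ∃ p ∈ M, ∃ q ∈ M, v = p - q}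
  have hsfin : sb.Finite := hli.setFinite
  haveI := hsfin.fintype
  set W : Submodule ℝ 𝔅 := Submodule.span ℝ sb with hW
  have hmemW : ∀ p q : ↥M, (p : 𝔅) - q ∈ W := by
    intro p q
    have h1 : (p : 𝔅) - q ∈ Submodule.span ℝ {v : 𝔅 | ∃ p ∈ M, ∃ q ∈ M, v = p - q} :=
      Submodule.subset_span ⟨p, p.2, q, q.2, rfl⟩
    rwa [← hspan] at h1
  have hrange : Submodule.span ℝ (Set.range ((↑) : sb → 𝔅)) = W := by
    rw [Subtype.range_coe]
  set bW : Module.Basis sb ℝ ↥W := (Module.Basis.span hli).map (LinearEquiv.ofEq _ _ hrange) with hbWdef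
  have hbWapp : ∀ i : sb, (bW i : 𝔅) = i := by
    intro i
    rw [hbWdef]
    simp [Module.Basis.map_apply, Module.Basis.span_apply]
  have hPQex : ∀ i : sb, ∃ p : ↥M, ∃ q : ↥M, (i : 𝔅) = (p : 𝔅) - q := by
    intro i
    obtain ⟨p, hp, q, hq, h⟩ := hsbS i.2
    exact ⟨⟨p, hp⟩, ⟨q, hq⟩, h⟩
  choose P Q hPQ using hPQex
  set c : ↥M → ↥M → sb → ℝ := fun p q i => bW.repr ⟨(p : 𝔅) - q, hmemW p q⟩ i with hcdef
  have hdecomp : ∀ p q : ↥M, (p : 𝔅) - q = ∑ i : sb, c p q i • (i : 𝔅) := by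
    intro p q
    have h1 := bW.sum_repr ⟨(p : 𝔅) - q, hmemW p q⟩
    calc (p : 𝔅) - q = ((∑ i : sb, c p q i • bW i : ↥W) : 𝔅) := by
          simp only [hcdef]; rw [h1]
      _ = ∑ i : sb, c p q i • (i : 𝔅) := by
          rw [Submodule.coe_sum]
          exact Finset.sum_congr rfl fun i _ => by rw [SetLike.val_smul, hbWapp]
  have hID : ∀ t : ℝ, 0 ≤ t → ∀ p q : ↥M,
      ψ t (p : 𝔅) y₀ - ψ t (q : 𝔅) y₀ =
        ∑ i : sb, c p q i • (ψ t (P i : 𝔅) y₀ - ψ t (Q i : 𝔅) y₀) := by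
    intro t ht p q
    set lm : 𝔅 →ₗ[ℝ] 𝔅 := IsLinearMap.mk' _ (hφlin t ht y₀) with hlm
    have hφs : ∀ v, φ t v y₀ = lm v := fun v => rfl
    rw [hlink t ht _ _ y₀, hφs, hdecomp p q, map_sum]
    refine Finset.sum_congr rfl fun i _ => ?_
    rw [map_smul]
    congr 1
    rw [hPQ i, ← hφs, ← hlink t ht _ _ y₀]
  have haff : ∀ t : ℝ, 0 ≤ t → ∀ (u v : 𝔅) (a b : ℝ), a + b = 1 →
      ψ t (a • u + b • v) y₀ = a • ψ t u y₀ + b • ψ t v y₀ := by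
    intro t ht u v a b hab
    have hb : b = 1 - a := by linarith
    have h2 : a • u + b • v - v = a • (u - v) := by
      rw [hb, sub_smul, one_smul, smul_sub]; abel
    have h1 := hlink t ht (a • u + b • v) v y₀
    rw [h2, (hφlin t ht y₀).map_smul, ← hlink t ht u v y₀] at h1
    have h3 : ψ t (a • u + b • v) y₀ = ψ t v y₀ + a • (ψ t u y₀ - ψ t v y₀) := by
      rw [← h1]; abel
    rw [h3, smul_sub, hb, sub_smul, one_smul]; abel
  -- the closed "affine relation" sets
  have hRel : ∀ p q : ↥M, IsClosed {f : ↥M → ↥M |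
      ((f p : 𝔅)) - (f q : 𝔅) = ∑ i : sb, c p q i • ((f (P i) : 𝔅) - (f (Q i) : 𝔅))} := by
    intro p q
    apply isClosed_eq
    · exact (continuous_subtype_val.comp (continuous_apply p)).sub
        (continuous_subtype_val.comp (continuous_apply q))
    · exact continuous_finset_sum _ fun i _ =>
        ((continuous_subtype_val.comp (continuous_apply (P i))).sub
          (continuous_subtype_val.comp (continuous_apply (Q i)))).const_smul _
  have hEsum : ∀ ξ ∈ E, ∀ p q : ↥M,
      (ξ p : 𝔅) - (ξ q : 𝔅) = ∑ i : sb, c p q i • ((ξ (P i) : 𝔅) - (ξ (Q i) : 𝔅)) := by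
    intro ξ hξ p q
    rw [hE] at hξ
    obtain ⟨r, hr, hσr, hlim⟩ := hξ
    have h0 : ∀ᶠ k in atTop, (0:ℝ) ≤ r k := hr.eventually_ge_atTop 0
    have hA : Tendsto (fun k => ψ (r k) (p : 𝔅) y₀ - ψ (r k) (q : 𝔅) y₀) atTop
        (𝓝 ((ξ p : 𝔅) - (ξ q : 𝔅))) := (hlim p).sub (hlim q)
    have hB : Tendsto (fun k => ∑ i : sb, c p q i •
        (ψ (r k) (P i : 𝔅) y₀ - ψ (r k) (Q i : 𝔅) y₀)) atTop
        (𝓝 (∑ i : sb, c p q i • ((ξ (P i) : 𝔅) - (ξ (Q i) : 𝔅)))) :=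
      tendsto_finset_sum _ fun i _ => ((hlim (P i)).sub (hlim (Q i))).const_smul _
    refine tendsto_nhds_unique (Tendsto.congr' ?_ hA) hB
    filter_upwards [h0] with k hk
    exact hID (r k) hk p q
  have hclsum : ∀ ξ ∈ closure E, ∀ p q : ↥M,
      (ξ p : 𝔅) - (ξ q : 𝔅) = ∑ i : sb, c p q i • ((ξ (P i) : 𝔅) - (ξ (Q i) : 𝔅)) :=
    fun ξ hξ p q => closure_minimal (fun f hf => hEsum f hf p q) (hRel p q) hξ
  -- linear-map representation
  have hGood : ∀ ξ : ↥M → ↥M,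
      (∀ p q : ↥M, (ξ p : 𝔅) - (ξ q : 𝔅) =
        ∑ i : sb, c p q i • ((ξ (P i) : 𝔅) - (ξ (Q i) : 𝔅))) →
      ∀ p q : ↥M,
        ((bW.constr ℝ (fun i => (⟨(ξ (P i) : 𝔅) - (ξ (Q i) : 𝔅),
          hmemW (ξ (P i)) (ξ (Q i))⟩ : ↥W))) ⟨(p : 𝔅) - q, hmemW p q⟩ : 𝔅) =
          (ξ p : 𝔅) - (ξ q : 𝔅) := by
    intro ξ hrel p q
    have h1 : (⟨(p : 𝔅) - q, hmemW p q⟩ : ↥W) = ∑ i : sb, c p q i • bW i :=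
      (bW.sum_repr _).symm
    rw [h1, map_sum]
    simp only [map_smul, Module.Basis.constr_basis]
    rw [Submodule.coe_sum, hrel p q]
    exact Finset.sum_congr rfl fun i _ => by rw [SetLike.val_smul]
  have hcomp_rel : ∀ ξ₁ ξ₂ : ↥M → ↥M,
      (∀ p q : ↥M, (ξ₁ p : 𝔅) - (ξ₁ q : 𝔅) =
        ∑ i : sb, c p q i • ((ξ₁ (P i) : 𝔅) - (ξ₁ (Q i) : 𝔅))) →
      (∀ p q : ↥M, (ξ₂ p : 𝔅) - (ξ₂ q : 𝔅) =
        ∑ i : sb, c p q i • ((ξ₂ (P i) : 𝔅) - (ξ₂ (Q i) : 𝔅))) →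
      ∀ p q : ↥M, ((ξ₁ ∘ ξ₂) p : 𝔅) - ((ξ₁ ∘ ξ₂) q : 𝔅) =
        ∑ i : sb, c p q i • (((ξ₁ ∘ ξ₂) (P i) : 𝔅) - ((ξ₁ ∘ ξ₂) (Q i) : 𝔅)) := by
    intro ξ₁ ξ₂ h1 h2 p q
    set A₁ := bW.constr ℝ (fun i => (⟨(ξ₁ (P i) : 𝔅) - (ξ₁ (Q i) : 𝔅),
      hmemW (ξ₁ (P i)) (ξ₁ (Q i))⟩ : ↥W)) with hA₁
    set A₂ := bW.constr ℝ (fun i => (⟨(ξ₂ (P i) : 𝔅) - (ξ₂ (Q i) : 𝔅),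
      hmemW (ξ₂ (P i)) (ξ₂ (Q i))⟩ : ↥W)) with hA₂
    have g1 := hGood ξ₁ h1
    have g2 := hGood ξ₂ h2
    have key : ∀ r w : ↥M, ((ξ₁ ∘ ξ₂) r : 𝔅) - ((ξ₁ ∘ ξ₂) w : 𝔅) =
        (A₁ (A₂ ⟨(r : 𝔅) - w, hmemW r w⟩) : 𝔅) := by
      intro r w
      have e2 : A₂ ⟨(r : 𝔅) - w, hmemW r w⟩ =
          ⟨(ξ₂ r : 𝔅) - (ξ₂ w : 𝔅), hmemW (ξ₂ r) (ξ₂ w)⟩ := Subtype.ext (g2 r w)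
      rw [e2]
      exact (g1 (ξ₂ r) (ξ₂ w)).symm
    rw [key p q]
    have h1' : (⟨(p : 𝔅) - q, hmemW p q⟩ : ↥W) = ∑ i : sb, c p q i • bW i :=
      (bW.sum_repr _).symm
    rw [h1', map_sum, map_sum]
    simp only [hA₁, hA₂, map_smul, Module.Basis.constr_basis]
    rw [Submodule.coe_sum]
    simp only [Function.comp_apply]
    refine Finset.sum_congr rfl fun i _ => ?_
    rw [SetLike.val_smul]
    congr 1
    exact g1 (ξ₂ (P i)) (ξ₂ (Q i))
  -- membership criterion for E
  have hmemE : ∀ (g : ↥M → ↥M) (r : ℕ → ℝ),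
      Tendsto r atTop atTop →
      Tendsto (fun m => σ (r m) y₀) atTop (𝓝 y₀) →
      (∀ᶠ m in atTop, (0:ℝ) ≤ r m) →
      (∀ p q : ↥M, (g p : 𝔅) - (g q : 𝔅) =
        ∑ i : sb, c p q i • ((g (P i) : 𝔅) - (g (Q i) : 𝔅))) →
      Tendsto (fun m => ψ (r m) (p₀ : 𝔅) y₀) atTop (𝓝 (g p₀ : 𝔅)) →
      (∀ i : sb, Tendsto (fun m => ψ (r m) (P i : 𝔅) y₀) atTop (𝓝 (g (P i) : 𝔅))) →
      (∀ i : sb, Tendsto (fun m => ψ (r m) (Q i : 𝔅) y₀) atTop (𝓝 (g (Q i) : 𝔅))) →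
      g ∈ E := by
    intro g r hr hσr h0 hrel hP0 hPs hQs
    rw [hE]
    refine ⟨r, hr, hσr, fun p => ?_⟩
    have hB : Tendsto (fun m => ψ (r m) (p₀ : 𝔅) y₀ +
        ∑ i : sb, c p p₀ i • (ψ (r m) (P i : 𝔅) y₀ - ψ (r m) (Q i : 𝔅) y₀)) atTop
        (𝓝 ((g p₀ : 𝔅) + ∑ i : sb, c p p₀ i • ((g (P i) : 𝔅) - (g (Q i) : 𝔅)))) :=
      hP0.add (tendsto_finset_sum _ fun i _ => ((hPs i).sub (hQs i)).const_smul _)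
    have heq : ((g p₀ : 𝔅) + ∑ i : sb, c p p₀ i • ((g (P i) : 𝔅) - (g (Q i) : 𝔅)))
        = (g p : 𝔅) := by
      rw [← hrel p p₀]; abel
    rw [heq] at hB
    refine Tendsto.congr' ?_ hB
    filter_upwards [h0] with m hm
    have h5 := hID (r m) hm p p₀
    rw [← h5]; abel
  -- E is closed
  have hEclosed : IsClosed E := by
    rw [← closure_subset_iff_isClosed]
    intro ξ hξ
    have happrox : ∀ m : ℕ, ∃ f, f ∈ E ∧
        dist (f p₀ : 𝔅) (ξ p₀ : 𝔅) < 1/(m+1) ∧ ∀ i : sb,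
          dist (f (P i) : 𝔅) (ξ (P i) : 𝔅) < 1/(m+1) ∧
          dist (f (Q i) : 𝔅) (ξ (Q i) : 𝔅) < 1/(m+1) := by
      intro m
      have h1 : ∀ (x : ↥M) (v : 𝔅), IsOpen {f : ↥M → ↥M | dist (f x : 𝔅) v < 1/(m+1)} := by
        intro x v
        have hco : Continuous fun f : ↥M → ↥M => (f x : 𝔅) :=
          continuous_subtype_val.comp (continuous_apply x)
        exact Metric.isOpen_ball.preimage hco
      have hopen : IsOpen {f : ↥M → ↥M | dist (f p₀ : 𝔅) (ξ p₀ : 𝔅) < 1/(m+1) ∧ ∀ i : sb,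
          dist (f (P i) : 𝔅) (ξ (P i) : 𝔅) < 1/(m+1) ∧
          dist (f (Q i) : 𝔅) (ξ (Q i) : 𝔅) < 1/(m+1)} := by
        have heq2 : {f : ↥M → ↥M | dist (f p₀ : 𝔅) (ξ p₀ : 𝔅) < 1/(m+1) ∧ ∀ i : sb,
            dist (f (P i) : 𝔅) (ξ (P i) : 𝔅) < 1/(m+1) ∧
            dist (f (Q i) : 𝔅) (ξ (Q i) : 𝔅) < 1/(m+1)} =
            {f : ↥M → ↥M | dist (f p₀ : 𝔅) (ξ p₀ : 𝔅) < 1/(m+1)} ∩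
            ⋂ i : sb, ({f : ↥M → ↥M | dist (f (P i) : 𝔅) (ξ (P i) : 𝔅) < 1/(m+1)} ∩
              {f : ↥M → ↥M | dist (f (Q i) : 𝔅) (ξ (Q i) : 𝔅) < 1/(m+1)}) := by
          ext f; simp [Set.mem_iInter, forall_and]
        rw [heq2]
        exact (h1 _ _).inter (isOpen_iInter_of_finite fun i => (h1 _ _).inter (h1 _ _))
      have hmem : ξ ∈ {f : ↥M → ↥M | dist (f p₀ : 𝔅) (ξ p₀ : 𝔅) < 1/(m+1) ∧ ∀ i : sb,
          dist (f (P i) : 𝔅) (ξ (P i) : 𝔅) < 1/(m+1) ∧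
          dist (f (Q i) : 𝔅) (ξ (Q i) : 𝔅) < 1/(m+1)} := by
        refine ⟨by simp; positivity, fun i => ⟨by simp; positivity, by simp; positivity⟩⟩
      obtain ⟨f, hfo, hfE⟩ := (_root_.mem_closure_iff.mp hξ) _ hopen hmem
      exact ⟨f, hfE, hfo.1, hfo.2⟩
    choose f hfE hf0 hfPQ using happrox
    have hchoice : ∀ m : ℕ, ∃ T : ℝ, (m:ℝ) ≤ T ∧ dist (σ T y₀) y₀ < 1/(m+1) ∧
        dist (ψ T (p₀ : 𝔅) y₀) (f m p₀ : 𝔅) < 1/(m+1) ∧ ∀ i : sb,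
          dist (ψ T (P i : 𝔅) y₀) (f m (P i) : 𝔅) < 1/(m+1) ∧
          dist (ψ T (Q i : 𝔅) y₀) (f m (Q i) : 𝔅) < 1/(m+1) := by
      intro m
      have hf := hfE m
      rw [hE] at hf
      obtain ⟨r, hr, hσr, hlim⟩ := hf
      have e1 := hr.eventually_ge_atTop (m:ℝ)
      have e2 := Metric.tendsto_nhds.mp hσr (1/(m+1)) (by positivity)
      have e3 := Metric.tendsto_nhds.mp (hlim p₀) (1/(m+1)) (by positivity)
      have e4 : ∀ᶠ k in atTop, ∀ i : sb,
          dist (ψ (r k) (P i : 𝔅) y₀) (f m (P i) : 𝔅) < 1/(m+1) ∧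
          dist (ψ (r k) (Q i : 𝔅) y₀) (f m (Q i) : 𝔅) < 1/(m+1) :=
        eventually_all.2 fun i =>
          (Metric.tendsto_nhds.mp (hlim (P i)) (1/(m+1)) (by positivity)).and
            (Metric.tendsto_nhds.mp (hlim (Q i)) (1/(m+1)) (by positivity))
      obtain ⟨k, hk⟩ := (e1.and (e2.and (e3.and e4))).exists
      exact ⟨r k, hk.1, hk.2.1, hk.2.2.1, hk.2.2.2⟩
    choose T hT1 hT2 hT3 hT4 using hchoice
    have hTtop : Tendsto T atTop atTop :=
      tendsto_atTop_mono hT1 tendsto_natCast_atTop_atTop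
    have hT0 : ∀ᶠ m in atTop, (0:ℝ) ≤ T m := hTtop.eventually_ge_atTop 0
    have hσT : Tendsto (fun m => σ (T m) y₀) atTop (𝓝 y₀) :=
      auxTendsto (auxDiv 1) (Eventually.of_forall fun m => (hT2 m).le)
    have htri : ∀ (x : ↥M) (m : ℕ), dist (ψ (T m) (x : 𝔅) y₀) (f m x : 𝔅) < 1/(m+1) →
        dist (f m x : 𝔅) (ξ x : 𝔅) < 1/(m+1) →
        dist (ψ (T m) (x : 𝔅) y₀) (ξ x : 𝔅) ≤ 2/(m+1) := by
      intro x m hA hB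
      calc dist (ψ (T m) (x : 𝔅) y₀) (ξ x : 𝔅)
          ≤ dist (ψ (T m) (x : 𝔅) y₀) (f m x : 𝔅) + dist (f m x : 𝔅) (ξ x : 𝔅) :=
            dist_triangle _ _ _
        _ ≤ 1/(m+1) + 1/(m+1) := add_le_add hA.le hB.le
        _ = 2/(m+1) := by ring
    have hlimP0 : Tendsto (fun m => ψ (T m) (p₀ : 𝔅) y₀) atTop (𝓝 (ξ p₀ : 𝔅)) :=
      auxTendsto (auxDiv 2) (Eventually.of_forall fun m => htri p₀ m (hT3 m) (hf0 m))
    have hlimP : ∀ i : sb, Tendsto (fun m => ψ (T m) (P i : 𝔅) y₀) atTop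
        (𝓝 (ξ (P i) : 𝔅)) := fun i =>
      auxTendsto (auxDiv 2)
        (Eventually.of_forall fun m => htri (P i) m (hT4 m i).1 (hfPQ m i).1)
    have hlimQ : ∀ i : sb, Tendsto (fun m => ψ (T m) (Q i : 𝔅) y₀) atTop
        (𝓝 (ξ (Q i) : 𝔅)) := fun i =>
      auxTendsto (auxDiv 2)
        (Eventually.of_forall fun m => htri (Q i) m (hT4 m i).2 (hfPQ m i).2)
    exact hmemE ξ T hTtop hσT hT0 (hclsum ξ hξ) hlimP0 hlimP hlimQ
  have hEcpt : IsCompact E := hEclosed.isCompact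
  -- composition
  have hEcomp : ∀ ξ₁ ∈ E, ∀ ξ₂ ∈ E, ξ₁ ∘ ξ₂ ∈ E := by
    intro ξ₁ hξ₁ ξ₂ hξ₂
    have hrel₁ := hEsum ξ₁ hξ₁
    have hrel₂ := hEsum ξ₂ hξ₂
    have hξ₁' := hξ₁; have hξ₂' := hξ₂
    rw [hE] at hξ₁' hξ₂'
    obtain ⟨sM, hs, hσs, hlims⟩ := hξ₁'
    obtain ⟨tN, ht, hσt, hlimt⟩ := hξ₂'
    have hψs : ∀ (x : ↥M) (m : ℕ), 0 ≤ sM m →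
        Tendsto (fun n => ψ (sM m + tN n) (x : 𝔅) y₀) atTop
          (𝓝 (ψ (sM m) (ξ₂ x : 𝔅) y₀)) := by
      intro x m hm
      have hcw : ContinuousWithinAt (fun p : ℝ × 𝔅 × Y => ψ p.1 p.2.1 p.2.2)
          {p : ℝ × 𝔅 × Y | 0 ≤ p.1} (sM m, (ξ₂ x : 𝔅), y₀) := hψcont _ hm
      have htr : Tendsto (fun n => ((sM m, ψ (tN n) (x : 𝔅) y₀, σ (tN n) y₀) : ℝ × 𝔅 × Y))
          atTop (𝓝[{p : ℝ × 𝔅 × Y | 0 ≤ p.1}] (sM m, (ξ₂ x : 𝔅), y₀)) := by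
        rw [tendsto_nhdsWithin_iff]
        refine ⟨?_, Eventually.of_forall fun n => hm⟩
        simpa [nhds_prod_eq] using tendsto_const_nhds.prodMk ((hlimt x).prodMk hσt)
      have hcomp := hcw.tendsto.comp htr
      refine Tendsto.congr' ?_ hcomp
      filter_upwards [ht.eventually_ge_atTop 0] with n hn
      exact (hψadd (sM m) (tN n) hm hn (x : 𝔅) y₀).symm
    have hσsm : ∀ m : ℕ, Tendsto (fun n => σ (sM m + tN n) y₀) atTop
        (𝓝 (σ (sM m) y₀)) := by
      intro m
      have h := ((hσy (sM m)).tendsto y₀).comp hσt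
      exact h.congr fun n => (hσadd (sM m) (tN n) y₀).symm
    have hchoice : ∀ m : ℕ, ∃ n : ℕ, (m:ℝ) ≤ tN n ∧ 0 ≤ tN n ∧
        dist (σ (sM m + tN n) y₀) (σ (sM m) y₀) < 1/(m+1) ∧
        (0 ≤ sM m →
          (dist (ψ (sM m + tN n) (p₀ : 𝔅) y₀) (ψ (sM m) (ξ₂ p₀ : 𝔅) y₀) < 1/(m+1) ∧
          ∀ i : sb,
            dist (ψ (sM m + tN n) (P i : 𝔅) y₀) (ψ (sM m) (ξ₂ (P i) : 𝔅) y₀) < 1/(m+1) ∧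
            dist (ψ (sM m + tN n) (Q i : 𝔅) y₀) (ψ (sM m) (ξ₂ (Q i) : 𝔅) y₀) < 1/(m+1))) := by
      intro m
      have e1 := ht.eventually_ge_atTop (m:ℝ)
      have e2 := ht.eventually_ge_atTop (0:ℝ)
      have e3 := Metric.tendsto_nhds.mp (hσsm m) (1/(m+1)) (by positivity)
      have e4 : ∀ᶠ n in atTop, (0 ≤ sM m →
          (dist (ψ (sM m + tN n) (p₀ : 𝔅) y₀) (ψ (sM m) (ξ₂ p₀ : 𝔅) y₀) < 1/(m+1) ∧
          ∀ i : sb,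
            dist (ψ (sM m + tN n) (P i : 𝔅) y₀) (ψ (sM m) (ξ₂ (P i) : 𝔅) y₀) < 1/(m+1) ∧
            dist (ψ (sM m + tN n) (Q i : 𝔅) y₀) (ψ (sM m) (ξ₂ (Q i) : 𝔅) y₀) < 1/(m+1))) := by
        by_cases hm : 0 ≤ sM m
        · have eP0 := Metric.tendsto_nhds.mp (hψs p₀ m hm) (1/(m+1)) (by positivity)
          have ePQ : ∀ᶠ n in atTop, ∀ i : sb,
              dist (ψ (sM m + tN n) (P i : 𝔅) y₀) (ψ (sM m) (ξ₂ (P i) : 𝔅) y₀) < 1/(m+1) ∧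
              dist (ψ (sM m + tN n) (Q i : 𝔅) y₀) (ψ (sM m) (ξ₂ (Q i) : 𝔅) y₀) < 1/(m+1) :=
            eventually_all.2 fun i =>
              (Metric.tendsto_nhds.mp (hψs (P i) m hm) (1/(m+1)) (by positivity)).and
                (Metric.tendsto_nhds.mp (hψs (Q i) m hm) (1/(m+1)) (by positivity))
          filter_upwards [eP0, ePQ] with n hn1 hn2
          exact fun _ => ⟨hn1, hn2⟩
        · exact Eventually.of_forall fun n h => absurd h hm
      obtain ⟨n, hn⟩ := (e1.and (e2.and (e3.and e4))).exists
      exact ⟨n, hn.1, hn.2.1, hn.2.2.1, hn.2.2.2⟩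
    choose nm hn1 hn2 hn3 hn4 using hchoice
    set r : ℕ → ℝ := fun m => sM m + tN (nm m) with hrdef
    have hrtop : Tendsto r atTop atTop := by
      have hbase : Tendsto (fun m : ℕ => sM m + (m:ℝ)) atTop atTop :=
        Tendsto.atTop_add_atTop hs tendsto_natCast_atTop_atTop
      exact tendsto_atTop_mono (fun m => add_le_add_right (hn1 m) _) hbase
    have hr0 : ∀ᶠ m in atTop, (0:ℝ) ≤ r m := by
      filter_upwards [hs.eventually_ge_atTop 0] with m hm
      have := hn2 m
      rw [hrdef]
      dsimp only
      linarith
    have hσr : Tendsto (fun m => σ (r m) y₀) atTop (𝓝 y₀) := by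
      have hg : Tendsto (fun m : ℕ => 1/((m:ℝ)+1) + dist (σ (sM m) y₀) y₀) atTop (𝓝 0) := by
        have := (auxDiv 1).add (tendsto_iff_dist_tendsto_zero.mp hσs)
        simpa using this
      refine auxTendsto hg (Eventually.of_forall fun m => ?_)
      calc dist (σ (r m) y₀) y₀
          ≤ dist (σ (r m) y₀) (σ (sM m) y₀) + dist (σ (sM m) y₀) y₀ := dist_triangle _ _ _
        _ ≤ 1/(m+1) + dist (σ (sM m) y₀) y₀ := add_le_add (hn3 m).le le_rfl
    have hlimF : ∀ x : ↥M,
        (∀ m : ℕ, 0 ≤ sM m →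
          dist (ψ (r m) (x : 𝔅) y₀) (ψ (sM m) (ξ₂ x : 𝔅) y₀) < 1/(m+1)) →
        Tendsto (fun m => ψ (r m) (x : 𝔅) y₀) atTop (𝓝 (ξ₁ (ξ₂ x) : 𝔅)) := by
      intro x hx
      have hg : Tendsto (fun m : ℕ => 1/((m:ℝ)+1) +
          dist (ψ (sM m) (ξ₂ x : 𝔅) y₀) (ξ₁ (ξ₂ x) : 𝔅)) atTop (𝓝 0) := by
        have := (auxDiv 1).add (tendsto_iff_dist_tendsto_zero.mp (hlims (ξ₂ x)))
        simpa using this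
      refine auxTendsto hg ?_
      filter_upwards [hs.eventually_ge_atTop 0] with m hm
      calc dist (ψ (r m) (x : 𝔅) y₀) (ξ₁ (ξ₂ x) : 𝔅)
          ≤ dist (ψ (r m) (x : 𝔅) y₀) (ψ (sM m) (ξ₂ x : 𝔅) y₀) +
            dist (ψ (sM m) (ξ₂ x : 𝔅) y₀) (ξ₁ (ξ₂ x) : 𝔅) := dist_triangle _ _ _
        _ ≤ 1/(m+1) + dist (ψ (sM m) (ξ₂ x : 𝔅) y₀) (ξ₁ (ξ₂ x) : 𝔅) :=
            add_le_add (hx m hm).le le_rfl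
    exact hmemE (ξ₁ ∘ ξ₂) r hrtop hσr hr0 (hcomp_rel ξ₁ ξ₂ hrel₁ hrel₂)
      (hlimF p₀ fun m hm => (hn4 m hm).1)
      (fun i => hlimF (P i) fun m hm => ((hn4 m hm).2 i).1)
      (fun i => hlimF (Q i) fun m hm => ((hn4 m hm).2 i).2)
  -- (4)
  set gcoord : sb → (↥W →L[ℝ] ℝ) :=
    fun i => LinearMap.toContinuousLinearMap (bW.coord i) with hgcoord
  set D : ℝ := Metric.diam M with hD
  set L : ℝ := (∑ i : sb, ‖gcoord i‖) * D + 1 with hLdef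
  have hL : 0 < L := by
    have h1 : 0 ≤ (∑ i : sb, ‖gcoord i‖) * D :=
      mul_nonneg (Finset.sum_nonneg fun i _ => ContinuousLinearMap.opNorm_nonneg _) Metric.diam_nonneg
    rw [hLdef]; linarith
  have hcbound : ∀ (p q : ↥M) (i : sb),
      |c p q i| ≤ ‖gcoord i‖ * dist (p : 𝔅) (q : 𝔅) := by
    intro p q i
    have h1 : c p q i = gcoord i ⟨(p : 𝔅) - q, hmemW p q⟩ := rfl
    rw [h1]
    calc |gcoord i ⟨(p : 𝔅) - q, hmemW p q⟩|
        = ‖gcoord i ⟨(p : 𝔅) - q, hmemW p q⟩‖ := (Real.norm_eq_abs _).symm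
      _ ≤ ‖gcoord i‖ * ‖(⟨(p : 𝔅) - q, hmemW p q⟩ : ↥W)‖ := (gcoord i).le_opNorm _
      _ = ‖gcoord i‖ * dist (p : 𝔅) (q : 𝔅) := by rw [dist_eq_norm]; rfl
  have hLip : ∀ ξ ∈ E, ∀ p q : ↥M,
      dist (ξ p : 𝔅) (ξ q : 𝔅) ≤ L * dist (p : 𝔅) (q : 𝔅) := by
    intro ξ hξ p q
    rw [dist_eq_norm, hEsum ξ hξ p q]
    calc ‖∑ i : sb, c p q i • ((ξ (P i) : 𝔅) - (ξ (Q i) : 𝔅))‖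
        ≤ ∑ i : sb, ‖c p q i • ((ξ (P i) : 𝔅) - (ξ (Q i) : 𝔅))‖ := norm_sum_le _ _
      _ ≤ ∑ i : sb, (‖gcoord i‖ * dist (p : 𝔅) (q : 𝔅)) * D := by
          refine Finset.sum_le_sum fun i _ => ?_
          rw [norm_smul, Real.norm_eq_abs]
          refine mul_le_mul (hcbound p q i) ?_ (norm_nonneg _)
            (mul_nonneg (ContinuousLinearMap.opNorm_nonneg _) dist_nonneg)
          rw [← dist_eq_norm]
          exact Metric.dist_le_diam_of_mem hMbdd (ξ (P i)).2 (ξ (Q i)).2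
      _ = ((∑ i : sb, ‖gcoord i‖) * D) * dist (p : 𝔅) (q : 𝔅) := by
          rw [← Finset.sum_mul, ← Finset.sum_mul]; ring
      _ ≤ L * dist (p : 𝔅) (q : 𝔅) := by
          refine mul_le_mul_of_nonneg_right ?_ dist_nonneg
          rw [hLdef]; linarith
  refine ⟨⟨hKclosed, hcond⟩, ⟨hMc, hMconv⟩, ⟨hEcpt, hEcomp⟩, L, hL, fun ξ hξ => ?_⟩
  refine ⟨?_, ?_, hLip ξ hξ⟩
  · intro p q a b ha hb hab hm
    have hξ' := hξ
    rw [hE] at hξ'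
    obtain ⟨r, hr, hσr, hlim⟩ := hξ'
    have h0 : ∀ᶠ k in atTop, (0:ℝ) ≤ r k := hr.eventually_ge_atTop 0
    have hA : Tendsto (fun k => ψ (r k) (a • (p : 𝔅) + b • (q : 𝔅)) y₀) atTop
        (𝓝 (ξ ⟨a • (p : 𝔅) + b • (q : 𝔅), hm⟩ : 𝔅)) := hlim ⟨_, hm⟩
    have hB : Tendsto (fun k => a • ψ (r k) (p : 𝔅) y₀ + b • ψ (r k) (q : 𝔅) y₀) atTop
        (𝓝 (a • (ξ p : 𝔅) + b • (ξ q : 𝔅))) :=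
      ((hlim p).const_smul a).add ((hlim q).const_smul b)
    refine tendsto_nhds_unique (Tendsto.congr' ?_ hA) hB
    filter_upwards [h0] with k hk
    exact haff (r k) hk _ _ a b hab
  · have h1 : Continuous fun p : ↥M => (ξ p : 𝔅) := by
      have hLnn : (0:ℝ) ≤ L := hL.le
      refine (LipschitzWith.of_dist_le_mul (K := ⟨L, hLnn⟩) ?_).continuous
      intro p q
      have := hLip ξ hξ p q
      rw [Subtype.dist_eq p q]
      exact this
    have h2 : ξ = fun p => (⟨(ξ p : 𝔅), (ξ p).2⟩ : ↥M) := by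
      funext p; rfl
    rw [h2]
    exact h1.subtype_mk _
end

section
/- Let 𝔅 be a finite-dimensional Banach space, A : ℝ → L(𝔅, 𝔅) and f : ℝ → 𝔅 continuous, and suppose the pair (A, f), regarded as an element of C(ℝ, L(𝔅,𝔅) × 𝔅), is τ-periodic, i.e. A(t + τ) = A(t) and f(t + τ) = f(t) for all t ∈ ℝ. If the equation x'(t) = A(t)x(t) + f(t) has a solution bounded on ℝ₊, then it has at least one τ-periodic solution. -/
open Filter Topology Set
set_option maxHeartbeats 1000000


lemma massera_grow {𝔅 : Type} [NormedAddCommGroup 𝔅] [NormedSpace ℝ 𝔅]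
    {A : ℝ → (𝔅 →L[ℝ] 𝔅)} {M : ℝ} (hMb : ∀ t, ‖A t‖ ≤ M)
    {u : ℝ → 𝔅} (hu : ∀ t, HasDerivAt u (A t (u t)) t) (t : ℝ) :
    ‖u t‖ ≤ ‖u 0‖ * Real.exp (M * |t|) := by
  have hM0 : 0 ≤ M := le_trans (norm_nonneg _) (hMb 0)
  rcases le_total 0 t with ht | ht
  · have h := norm_le_gronwallBound_of_norm_deriv_right_le (f := u)
      (f' := fun s => A s (u s)) (δ := ‖u 0‖) (K := M) (ε := 0) (a := 0) (b := t)
      (fun s _ => ((hu s).continuousAt).continuousWithinAt)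
      (fun s _ => (hu s).hasDerivWithinAt) le_rfl
      (fun s _ => by
        calc ‖A s (u s)‖ ≤ ‖A s‖ * ‖u s‖ := (A s).le_opNorm _
        _ ≤ M * ‖u s‖ + 0 := by nlinarith [norm_nonneg (u s), hMb s])
      t ⟨ht, le_rfl⟩
    rw [sub_zero, gronwallBound_ε0] at h
    rwa [abs_of_nonneg ht]
  · set v : ℝ → 𝔅 := fun s => u (-s) with hv
    have hv' : ∀ s : ℝ, HasDerivAt v ((-1 : ℝ) • (A (-s) (u (-s)))) s := by
      intro s
      exact HasDerivAt.scomp s (hu (-s)) (hasDerivAt_neg s)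
    have h := norm_le_gronwallBound_of_norm_deriv_right_le (f := v)
      (f' := fun s => (-1 : ℝ) • (A (-s) (u (-s)))) (δ := ‖u 0‖) (K := M) (ε := 0)
      (a := 0) (b := -t)
      (fun s _ => ((hv' s).continuousAt).continuousWithinAt)
      (fun s _ => (hv' s).hasDerivWithinAt)
      (by simp [hv])
      (fun s _ => by
        have : ‖(-1 : ℝ) • (A (-s) (u (-s)))‖ = ‖A (-s) (v s)‖ := by simp [hv]
        rw [this]
        calc ‖A (-s) (v s)‖ ≤ ‖A (-s)‖ * ‖v s‖ := (A (-s)).le_opNorm _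
        _ ≤ M * ‖v s‖ + 0 := by nlinarith [norm_nonneg (v s), hMb (-s)])
      (-t) ⟨by linarith, le_rfl⟩
    rw [sub_zero, gronwallBound_ε0] at h
    simpa [hv, abs_of_nonpos ht] using h


theorem massera_aux {𝔅 : Type} [NormedAddCommGroup 𝔅] [NormedSpace ℝ 𝔅] [FiniteDimensional ℝ 𝔅]
    (A : ℝ → (𝔅 →L[ℝ] 𝔅)) (f : ℝ → 𝔅) (τ : ℝ)
    (hA : Continuous A) (hf : Continuous f)
    (hAper : ∀ t : ℝ, A (t + τ) = A t) (hfper : ∀ t : ℝ, f (t + τ) = f t)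
    (hτ : 0 < τ) (x : ℝ → 𝔅) (C : ℝ)
    (hx : ∀ t : ℝ, HasDerivAt x (A t (x t) + f t) t)
    (hC : ∀ t : ℝ, 0 ≤ t → ‖x t‖ ≤ C) :
    ∃ x : ℝ → 𝔅, (∀ t : ℝ, HasDerivAt x (A t (x t) + f t) t) ∧
      ∀ t : ℝ, x (t + τ) = x t := by
  -- global bound on A
  obtain ⟨M, hM0, hMb⟩ : ∃ M : ℝ, 0 ≤ M ∧ ∀ t, ‖A t‖ ≤ M := by
    obtain ⟨M, hM⟩ := (isCompact_Icc (a := (0:ℝ)) (b := τ)).exists_bound_of_continuousOn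
      hA.continuousOn
    refine ⟨max M 0, le_max_right _ _, fun t => ?_⟩
    obtain ⟨y, hy, hyx⟩ := Function.Periodic.exists_mem_Ico₀ (f := A) hAper hτ t
    rw [hyx]
    exact le_trans (hM y ⟨hy.1, hy.2.le⟩) (le_max_left _ _)
  have hAn : ∀ (k : ℕ) (t : ℝ), A (t + k * τ) = A t := fun k t =>
    (Function.Periodic.nat_mul hAper k) t
  have hfn : ∀ (k : ℕ) (t : ℝ), f (t + k * τ) = f t := fun k t =>
    (Function.Periodic.nat_mul hfper k) t
  -- the averaged translates
  set c : ℕ → ℝ → 𝔅 := fun n t => (n : ℝ)⁻¹ • ∑ k ∈ Finset.range n, x (t + k * τ) with hcdef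
  -- translates are solutions
  have hxk : ∀ (k : ℕ) (t : ℝ),
      HasDerivAt (fun s => x (s + k * τ)) (A t (x (t + k * τ)) + f t) t := by
    intro k t
    have h1 : HasDerivAt (fun s : ℝ => s + (k : ℝ) * τ) 1 t := by
      simpa using (hasDerivAt_id t).add_const ((k : ℝ) * τ)
    have := HasDerivAt.scomp t (hx (t + k * τ)) h1
    simpa [hAn k t, hfn k t, Function.comp_def] using this
  -- each average (n ≥ 1) is a solution
  have hc : ∀ n : ℕ, ∀ t : ℝ, HasDerivAt (c (n + 1)) (A t (c (n + 1) t) + f t) t := by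
    intro n t
    have hsum : HasDerivAt (fun s => ∑ k ∈ Finset.range (n + 1), x (s + k * τ))
        (∑ k ∈ Finset.range (n + 1), (A t (x (t + k * τ)) + f t)) t :=
      HasDerivAt.fun_sum fun k _ => hxk k t
    have h2 := hsum.fun_const_smul ((n + 1 : ℕ) : ℝ)⁻¹
    have hne : ((n + 1 : ℕ) : ℝ) ≠ 0 := by positivity
    convert h2 using 1
    rw [Finset.sum_add_distrib, smul_add, Finset.sum_const, Finset.card_range]
    congr 1
    · rw [hcdef]
      simp only
      rw [map_smul, map_sum]
    · rw [← Nat.cast_smul_eq_nsmul ℝ, smul_smul, inv_mul_cancel₀ hne, one_smul]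
  -- bound at 0
  have hC0 : 0 ≤ C := le_trans (norm_nonneg _) (hC 0 le_rfl)
  have hc0 : ∀ n : ℕ, c (n + 1) 0 ∈ Metric.closedBall (0 : 𝔅) C := by
    intro n
    rw [Metric.mem_closedBall, dist_zero_right, hcdef]
    simp only
    rw [norm_smul]
    have h1 : ‖∑ k ∈ Finset.range (n + 1), x ((0:ℝ) + k * τ)‖ ≤ (n + 1 : ℕ) * C := by
      calc ‖∑ k ∈ Finset.range (n + 1), x ((0:ℝ) + k * τ)‖
          ≤ ∑ k ∈ Finset.range (n + 1), ‖x ((0:ℝ) + k * τ)‖ := norm_sum_le _ _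
        _ ≤ ∑ _k ∈ Finset.range (n + 1), C := by
            refine Finset.sum_le_sum fun k _ => hC _ (by positivity)
        _ = (n + 1 : ℕ) * C := by simp
    have h2 : ‖((n + 1 : ℕ) : ℝ)⁻¹‖ = ((n + 1 : ℕ) : ℝ)⁻¹ := by
      rw [Real.norm_eq_abs, abs_of_nonneg]; positivity
    rw [h2]
    calc ((n + 1 : ℕ) : ℝ)⁻¹ * ‖∑ k ∈ Finset.range (n + 1), x ((0:ℝ) + k * τ)‖
        ≤ ((n + 1 : ℕ) : ℝ)⁻¹ * ((n + 1 : ℕ) * C) := by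
          refine mul_le_mul_of_nonneg_left h1 (by positivity)
      _ = C := by field_simp
  -- Bolzano–Weierstrass at t = 0
  obtain ⟨c₀, -, φ, hφ, hlim⟩ := tendsto_subseq_of_bounded
    (Metric.isBounded_closedBall (x := (0:𝔅)) (r := C)) hc0
  set w : ℕ → ℝ → 𝔅 := fun j => c (φ j + 1) with hwdef
  have hw : ∀ j t, HasDerivAt (w j) (A t (w j t) + f t) t := fun j t => hc (φ j) t
  have hwlim0 : Tendsto (fun j => w j 0) atTop (𝓝 c₀) := hlim
  -- Gronwall difference bound
  have key : ∀ i j (t : ℝ), ‖w i t - w j t‖ ≤ ‖w i 0 - w j 0‖ * Real.exp (M * |t|) := by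
    intro i j t
    refine massera_grow hMb (u := fun s => w i s - w j s) (fun s => ?_) t
    have := (hw i s).fun_sub (hw j s)
    convert this using 1
    simp [map_sub]
  -- pointwise limit exists
  have hcau : ∀ t : ℝ, CauchySeq (fun j => w j t) := by
    intro t
    rw [Metric.cauchySeq_iff]
    intro ε hε
    have hE : 0 < Real.exp (M * |t|) := Real.exp_pos _
    obtain ⟨N, hN⟩ := Metric.cauchySeq_iff.1 hwlim0.cauchySeq (ε / Real.exp (M * |t|))
      (by positivity)
    refine ⟨N, fun i hi j hj => ?_⟩
    have h1 := key i j t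
    have hN' := hN i hi j hj
    rw [dist_eq_norm] at hN' ⊢
    calc ‖w i t - w j t‖ ≤ ‖w i 0 - w j 0‖ * Real.exp (M * |t|) := h1
      _ < ε / Real.exp (M * |t|) * Real.exp (M * |t|) := by
          exact mul_lt_mul_of_pos_right hN' hE
      _ = ε := div_mul_cancel₀ _ hE.ne'
  have hex : ∀ t : ℝ, ∃ y, Tendsto (fun j => w j t) atTop (𝓝 y) := fun t =>
    cauchySeq_tendsto_of_complete (hcau t)
  choose L hL using hex
  -- closeness bound
  have hclose : ∀ j (t : ℝ), ‖L t - w j t‖ ≤ ‖L 0 - w j 0‖ * Real.exp (M * |t|) := by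
    intro j t
    refine le_of_tendsto_of_tendsto'
      (f := fun i => ‖w i t - w j t‖) (g := fun i => ‖w i 0 - w j 0‖ * Real.exp (M * |t|))
      (((hL t).sub tendsto_const_nhds).norm)
      ((((hL 0).sub tendsto_const_nhds).norm).mul_const _)
      (fun i => key i j t)
  have ha0 : Tendsto (fun j => ‖L 0 - w j 0‖) atTop (𝓝 0) := by
    have := (tendsto_const_nhds (x := L 0) (f := atTop)).sub (hL 0)
    simpa using this.norm
  have hwcont : ∀ j, Continuous (w j) := fun j =>
    continuous_iff_continuousAt.2 fun t => (hw j t).continuousAt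
  -- L is continuous
  have hLcont : Continuous L := by
    rw [continuous_iff_continuousAt]
    intro t₀
    set R : ℝ := |t₀| + 1 with hR
    have hTU : TendstoUniformlyOn w L atTop (Icc (-R) R) := by
      rw [Metric.tendstoUniformlyOn_iff]
      intro ε hε
      have h1 : Tendsto (fun j => ‖L 0 - w j 0‖ * Real.exp (M * R)) atTop (𝓝 0) := by
        simpa using ha0.mul_const (Real.exp (M * R))
      filter_upwards [h1.eventually_lt_const hε] with j hj t ht
      rw [dist_eq_norm]
      have habs : |t| ≤ R := abs_le.2 ⟨ht.1, ht.2⟩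
      calc ‖L t - w j t‖ ≤ ‖L 0 - w j 0‖ * Real.exp (M * |t|) := hclose j t
        _ ≤ ‖L 0 - w j 0‖ * Real.exp (M * R) := by
            refine mul_le_mul_of_nonneg_left ?_ (norm_nonneg _)
            exact Real.exp_le_exp.2 (mul_le_mul_of_nonneg_left habs hM0)
        _ < ε := hj
    have hcOn : ContinuousOn L (Icc (-R) R) :=
      hTU.continuousOn (Eventually.of_forall fun j => (hwcont j).continuousOn).frequently
    have ht₀ : -R < t₀ ∧ t₀ < R := by
      constructor <;> [linarith [neg_abs_le t₀]; linarith [le_abs_self t₀]]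
    exact hcOn.continuousAt (Icc_mem_nhds ht₀.1 ht₀.2)
  have hgcont : Continuous fun s : ℝ => A s (L s) + f s :=
    ((isBoundedBilinearMap_apply.continuous).comp (hA.prodMk hLcont)).add hf
  have hwgcont : ∀ j, Continuous fun s : ℝ => A s (w j s) + f s := fun j =>
    ((isBoundedBilinearMap_apply.continuous).comp (hA.prodMk (hwcont j))).add hf
  -- the integral equation for each w j
  have hwint : ∀ j (t : ℝ), w j t = w j 0 + ∫ s in (0:ℝ)..t, (A s (w j s) + f s) := by
    intro j t
    have h1 := intervalIntegral.integral_eq_sub_of_hasDerivAt (a := 0) (b := t)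
      (fun s _ => hw j s) ((hwgcont j).intervalIntegrable 0 t)
    rw [h1]
    abel
  -- the integral equation for L
  have hLint : ∀ t : ℝ, L t = L 0 + ∫ s in (0:ℝ)..t, (A s (L s) + f s) := by
    intro t
    refine tendsto_nhds_unique (hL t) ?_
    have heq : (fun j => w j t) = fun j => w j 0 + ∫ s in (0:ℝ)..t, (A s (w j s) + f s) :=
      funext fun j => hwint j t
    rw [heq]
    refine (hL 0).add ?_
    rw [tendsto_iff_norm_sub_tendsto_zero]
    have habs : ∀ s ∈ Set.uIoc (0:ℝ) t, |s| ≤ |t| := by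
      intro s hs
      refine abs_le.2 ⟨le_trans (le_min (by linarith [abs_nonneg t]) (neg_abs_le t)) hs.1.le,
        le_trans hs.2 (max_le (abs_nonneg t) (le_abs_self t))⟩
    refine squeeze_zero (fun j => norm_nonneg _)
      (g := fun j => (M * (‖L 0 - w j 0‖ * Real.exp (M * |t|))) * |t - 0|) (fun j => ?_) ?_
    · rw [← intervalIntegral.integral_sub ((hwgcont j).intervalIntegrable 0 t)
        (hgcont.intervalIntegrable 0 t)]
      refine intervalIntegral.norm_integral_le_of_norm_le_const fun s hs => ?_
      have h2 : (A s (w j s) + f s) - (A s (L s) + f s) = A s (w j s - L s) := by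
        rw [map_sub]; abel
      rw [h2]
      calc ‖A s (w j s - L s)‖ ≤ ‖A s‖ * ‖w j s - L s‖ := (A s).le_opNorm _
        _ ≤ M * (‖L 0 - w j 0‖ * Real.exp (M * |t|)) := by
            refine mul_le_mul (hMb s) ?_ (norm_nonneg _) hM0
            rw [norm_sub_rev]
            calc ‖L s - w j s‖ ≤ ‖L 0 - w j 0‖ * Real.exp (M * |s|) := hclose j s
              _ ≤ ‖L 0 - w j 0‖ * Real.exp (M * |t|) := by
                  refine mul_le_mul_of_nonneg_left ?_ (norm_nonneg _)
                  exact Real.exp_le_exp.2 (mul_le_mul_of_nonneg_left (habs s hs) hM0)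
    · have := ((ha0.mul_const (Real.exp (M * |t|))).const_mul M).mul_const |t - 0|
      simpa using this
  -- L is a solution
  have hLd : ∀ t : ℝ, HasDerivAt L (A t (L t) + f t) t := by
    intro t
    have h1 : HasDerivAt (fun u => L 0 + ∫ s in (0:ℝ)..u, (A s (L s) + f s))
        (A t (L t) + f t) t := by
      exact (intervalIntegral.integral_hasDerivAt_right (hgcont.intervalIntegrable 0 t)
        (hgcont.stronglyMeasurableAtFilter _ _) hgcont.continuousAt).const_add (L 0)
    exact h1.congr_of_eventuallyEq (Eventually.of_forall fun s => hLint s)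
  -- L is τ-periodic
  have hper : ∀ t : ℝ, L (t + τ) = L t := by
    intro t
    have htend : Tendsto (fun j => ((φ j + 1 : ℕ) : ℝ)) atTop atTop :=
      tendsto_natCast_atTop_atTop.comp ((tendsto_add_atTop_nat 1).comp hφ.tendsto_atTop)
    have hdiff : ∀ n : ℕ, c (n + 1) (t + τ) - c (n + 1) t
        = ((n + 1 : ℕ) : ℝ)⁻¹ • (x (t + (n + 1 : ℕ) * τ) - x t) := by
      intro n
      rw [hcdef]
      simp only
      rw [← smul_sub]
      congr 1
      have h1 : ∀ k ∈ Finset.range (n + 1),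
          x (t + τ + (k:ℝ) * τ) - x (t + (k:ℝ) * τ)
            = x (t + ((k+1 : ℕ):ℝ) * τ) - x (t + (k:ℝ) * τ) := by
        intro k _
        congr 2
        push_cast
        ring
      rw [← Finset.sum_sub_distrib, Finset.sum_congr rfl h1,
        Finset.sum_range_sub (fun k : ℕ => x (t + (k:ℝ) * τ))]
      simp
    have hto : Tendsto (fun j => w j (t + τ) - w j t) atTop (𝓝 0) := by
      have hev : ∀ᶠ j in atTop, ‖w j (t + τ) - w j t‖
          ≤ ((φ j + 1 : ℕ) : ℝ)⁻¹ * (C + ‖x t‖) := by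
        have h2 : Tendsto (fun j => t + ((φ j + 1 : ℕ) : ℝ) * τ) atTop atTop :=
          tendsto_atTop_add_const_left atTop t (htend.atTop_mul_const hτ)
        filter_upwards [h2.eventually_ge_atTop 0] with j hj
        rw [hwdef]
        simp only
        rw [hdiff (φ j), norm_smul]
        have h3 : ‖((φ j + 1 : ℕ) : ℝ)⁻¹‖ = ((φ j + 1 : ℕ) : ℝ)⁻¹ := by
          rw [Real.norm_eq_abs, abs_of_nonneg]; positivity
        rw [h3]
        refine mul_le_mul_of_nonneg_left ?_ (by positivity)
        exact le_trans (norm_sub_le _ _) (add_le_add (hC _ hj) le_rfl)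
      have hlim0 : Tendsto (fun j => ((φ j + 1 : ℕ) : ℝ)⁻¹ * (C + ‖x t‖)) atTop (𝓝 0) := by
        simpa using (htend.inv_tendsto_atTop).mul_const (C + ‖x t‖)
      exact squeeze_zero_norm' hev hlim0
    refine tendsto_nhds_unique (hL (t + τ)) ?_
    have := (hL t).add hto
    simpa using this
  exact ⟨L, hLd, hper⟩

/-- Massera-type theorem: if the pair `(A, f)` is `τ`-periodic and the equation
`x' = A(t)x + f(t)` (fibre a finite-dimensional Banach space) has a solution bounded
on `ℝ₊`, then it has at least one `τ`-periodic solution. -/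
theorem periodic_solution_of_periodic_coefficients
    {𝔅 : Type} [NormedAddCommGroup 𝔅] [NormedSpace ℝ 𝔅] [FiniteDimensional ℝ 𝔅]
    (A : ℝ → (𝔅 →L[ℝ] 𝔅)) (f : ℝ → 𝔅) (τ : ℝ)
    (hA : Continuous A) (hf : Continuous f)
    (hAper : ∀ t : ℝ, A (t + τ) = A t) (hfper : ∀ t : ℝ, f (t + τ) = f t)
    (hbdd : ∃ (x : ℝ → 𝔅) (C : ℝ),
      (∀ t : ℝ, HasDerivAt x (A t (x t) + f t) t) ∧ ∀ t : ℝ, 0 ≤ t → ‖x t‖ ≤ C) :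
    ∃ x : ℝ → 𝔅, (∀ t : ℝ, HasDerivAt x (A t (x t) + f t) t) ∧
      ∀ t : ℝ, x (t + τ) = x t := by
  obtain ⟨x, C, hx, hC⟩ := hbdd
  rcases lt_trichotomy τ 0 with hτ | hτ | hτ
  · have hAper' : ∀ t : ℝ, A (t + -τ) = A t := fun t => by
      have := hAper (t + -τ); rw [add_assoc, neg_add_cancel, add_zero] at this
      exact this.symm
    have hfper' : ∀ t : ℝ, f (t + -τ) = f t := fun t => by
      have := hfper (t + -τ); rw [add_assoc, neg_add_cancel, add_zero] at this
      exact this.symm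
    obtain ⟨y, hy, hyper⟩ := massera_aux A f (-τ) hA hf hAper' hfper'
      (by linarith) x C hx hC
    refine ⟨y, hy, fun t => ?_⟩
    have := hyper (t + τ)
    rw [add_assoc, add_neg_cancel, add_zero] at this
    exact this.symm
  · subst hτ
    exact ⟨x, hx, fun t => by rw [add_zero]⟩
  · exact massera_aux A f τ hA hf hAper hfper hτ x C hx hC
end
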